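/- Let α > 0, ε > 0 and c < t < 0. Let h_ε^{-1} : ℝ → ℝ denote the inverse of the strictly increasing bijection h_ε(γ) = γ·exp((γ² − α²)/(2ε)). Then there exists a unique constant D ∈ (t²/2, c²/2) such that ∫_c^t h_ε^{-1}(y²/2 − D) dy = 0. -/

import Mathlib

theorem stmt_16 (α ε c t : ℝ) (hα : 0 < α) (hε : 0 < ε) (hct : c < t) (ht : t < 0)
    (h hinv : ℝ → ℝ)
    (hh : ∀ γ : ℝ, h γ = γ * Real.exp ((γ ^ 2 - α ^ 2) / (2 * ε)))
    (hinv_left : Function.LeftInverse hinv h)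
    (hinv_right : Function.RightInverse hinv h) :
    ∃! D : ℝ, D ∈ Set.Ioo (t ^ 2 / 2) (c ^ 2 / 2) ∧
      (∫ y in c..t, hinv (y ^ 2 / 2 - D)) = 0 := by
  have hc0 : c < 0 := hct.trans ht
  -- derivative of h
  have hderiv : ∀ γ : ℝ, HasDerivAt h
      (Real.exp ((γ ^ 2 - α ^ 2) / (2 * ε)) * (1 + γ ^ 2 / ε)) γ := by
    intro γ
    have hu : HasDerivAt (fun x : ℝ => (x ^ 2 - α ^ 2) / (2 * ε)) (γ / ε) γ := by
      have h1 := (((hasDerivAt_pow 2 γ).sub_const (α ^ 2)).div_const (2 * ε))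
      refine h1.congr_deriv ?_
      have hε' : (ε : ℝ) ≠ 0 := ne_of_gt hε
      field_simp
      ring
    have he := hu.exp
    have := (hasDerivAt_id γ).mul he
    have heq : (fun x : ℝ => x * Real.exp ((x ^ 2 - α ^ 2) / (2 * ε))) = h := by
      funext x; rw [hh x]
    simp only [id_eq] at this
    change HasDerivAt (fun x : ℝ => x * Real.exp ((x ^ 2 - α ^ 2) / (2 * ε))) _ γ at this
    rw [heq] at this
    convert this using 1
    have hε' : (ε : ℝ) ≠ 0 := ne_of_gt hε
    field_simp
  have hmono : StrictMono h := by
    apply strictMono_of_deriv_pos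
    intro x
    rw [(hderiv x).deriv]
    positivity
  have hsurj : Function.Surjective h := hinv_right.surjective
  set e : ℝ ≃o ℝ := StrictMono.orderIsoOfSurjective h hmono hsurj with he
  have hinv_eq : hinv = ⇑e.symm := by
    funext x
    apply hmono.injective
    rw [hinv_right x]
    exact (StrictMono.orderIsoOfSurjective_self_symm_apply h hmono hsurj x).symm
  have hinv_cont : Continuous hinv := by rw [hinv_eq]; exact e.symm.continuous
  have hinv_mono : StrictMono hinv := by rw [hinv_eq]; exact e.symm.strictMono
  have h0 : h 0 = 0 := by rw [hh]; ring
  have hinv0 : hinv 0 = 0 := by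
    have := hinv_left 0; rwa [h0] at this
  have hinv_pos : ∀ x : ℝ, 0 < x → 0 < hinv x := fun x hx => by
    rw [← hinv0]; exact hinv_mono hx
  have hinv_neg : ∀ x : ℝ, x < 0 → hinv x < 0 := fun x hx => by
    rw [← hinv0]; exact hinv_mono hx
  set F : ℝ → ℝ := fun D => ∫ y in c..t, hinv (y ^ 2 / 2 - D) with hF
  have hcont2 : Continuous (Function.uncurry fun (D y : ℝ) => hinv (y ^ 2 / 2 - D)) := by
    apply hinv_cont.comp
    fun_prop
  have hFcont : Continuous F :=
    intervalIntegral.continuous_parametric_intervalIntegral_of_continuous' hcont2 c t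
  have hintg : ∀ D : ℝ, IntervalIntegrable (fun y => hinv (y ^ 2 / 2 - D)) MeasureTheory.volume c t := by
    intro D
    exact (hinv_cont.comp (by fun_prop)).intervalIntegrable c t
  -- strict antitonicity
  have hanti : StrictAnti F := by
    intro D₁ D₂ hD
    have hpos : 0 < ∫ y in c..t, (hinv (y ^ 2 / 2 - D₁) - hinv (y ^ 2 / 2 - D₂)) := by
      apply intervalIntegral.intervalIntegral_pos_of_pos _ _ hct
      · exact ((hintg D₁).sub (hintg D₂))
      · intro x
        have : hinv (x ^ 2 / 2 - D₂) < hinv (x ^ 2 / 2 - D₁) := hinv_mono (by linarith)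
        linarith
    rw [intervalIntegral.integral_sub (hintg D₁) (hintg D₂)] at hpos
    simpa [hF] using sub_pos.mp (by linarith)
  have hsq : t ^ 2 / 2 < c ^ 2 / 2 := by nlinarith
  -- sign at endpoints
  have hFpos : 0 < F (t ^ 2 / 2) := by
    apply intervalIntegral.intervalIntegral_pos_of_pos_on (hintg _) _ hct
    intro x hx
    apply hinv_pos
    have : x < 0 := hx.2.trans ht
    nlinarith [hx.2]
  have hFneg : F (c ^ 2 / 2) < 0 := by
    have : 0 < ∫ y in c..t, -hinv (y ^ 2 / 2 - c ^ 2 / 2) := by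
      apply intervalIntegral.intervalIntegral_pos_of_pos_on ((hintg _).neg) _ hct
      intro x hx
      have := hinv_neg (x ^ 2 / 2 - c ^ 2 / 2) (by nlinarith [hx.1, hx.2.trans ht])
      simp only [Pi.neg_apply]
      linarith
    rw [intervalIntegral.integral_neg] at this
    simpa [hF] using by linarith
  -- existence via IVT
  obtain ⟨D, hDmem, hDeq⟩ : ∃ D ∈ Set.Ioo (t ^ 2 / 2) (c ^ 2 / 2), F D = 0 := by
    have := intermediate_value_Ioo' (le_of_lt hsq) hFcont.continuousOn
      (a := t ^ 2 / 2) (b := c ^ 2 / 2)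
    have h0mem : (0 : ℝ) ∈ Set.Ioo (F (c ^ 2 / 2)) (F (t ^ 2 / 2)) := ⟨hFneg, hFpos⟩
    obtain ⟨D, hD, hDeq⟩ := this h0mem
    exact ⟨D, hD, hDeq⟩
  refine ⟨D, ⟨hDmem, hDeq⟩, ?_⟩
  rintro D' ⟨hD'mem, hD'eq⟩
  exact hanti.injective (hD'eq.trans hDeq.symm)
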